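/- The EzGP covariance matrix is positive semi-definite: given inputs w_i = (x_i, z_i) for i = 1,...,n with x_i ∈ R^p and z_i ∈ ∏_h {1,...,m_h}, positive variance parameters σ_0^2, σ_1^2, ..., σ_q^2, and positive correlation parameters θ_k^{(0)} and θ_{k,l}^{(h)}, the n×n matrix Φ with Φ_{ij} = σ_0^2 exp(-Σ_k θ_k^{(0)}(x_{ik}-x_{jk})^2) + Σ_{h=1}^q Σ_{l=1}^{m_h} 1[z_{ih}=z_{jh}=l] σ_h^2 exp(-Σ_k θ_{k,l}^{(h)}(x_{ik}-x_{jk})^2) is positive semi-definite. -/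

import Mathlib

set_option linter.unnecessarySeqFocus false

lemma pow_quad_nonneg {n p : ℕ} (a : Fin p → ℝ) (ha : ∀ k, 0 ≤ a k)
    (x : Fin n → Fin p → ℝ) (d : Fin n → ℝ) (N : ℕ) :
    0 ≤ ∑ i, ∑ j, d i * d j * (∑ k, a k * (x i k * x j k)) ^ N := by
  set e : (Fin N → Fin p) → Fin n → ℝ := fun g i => d i * ∏ t, x i (g t) with he
  have expand : ∀ i j : Fin n, d i * d j * (∑ k, a k * (x i k * x j k)) ^ N
      = ∑ g : Fin N → Fin p, (∏ t, a (g t)) * (e g i * e g j) := by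
    intro i j
    have h1 : (∑ k, a k * (x i k * x j k)) ^ N
        = ∑ g ∈ Fintype.piFinset (fun _ : Fin N => (Finset.univ : Finset (Fin p))),
            ∏ t, a (g t) * (x i (g t) * x j (g t)) := by
      calc (∑ k, a k * (x i k * x j k)) ^ N
          = ∏ _t : Fin N, (∑ k, a k * (x i k * x j k)) := by
            rw [Finset.prod_const, Finset.card_univ, Fintype.card_fin]
        _ = _ := Finset.prod_univ_sum (fun _ => Finset.univ)
              (fun _ k => a k * (x i k * x j k))
    rw [h1, Fintype.piFinset_univ, Finset.mul_sum]
    refine Finset.sum_congr rfl fun g _ => ?_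
    simp only [he]
    rw [Finset.prod_mul_distrib, Finset.prod_mul_distrib]
    ring
  calc ∑ i, ∑ j, d i * d j * (∑ k, a k * (x i k * x j k)) ^ N
      = ∑ i, ∑ j, ∑ g : Fin N → Fin p, (∏ t, a (g t)) * (e g i * e g j) := by
        simp only [expand]
    _ = ∑ i, ∑ g : Fin N → Fin p, ∑ j, (∏ t, a (g t)) * (e g i * e g j) :=
        Finset.sum_congr rfl fun i _ => Finset.sum_comm
    _ = ∑ g : Fin N → Fin p, ∑ i, ∑ j, (∏ t, a (g t)) * (e g i * e g j) :=
        Finset.sum_comm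
    _ = ∑ g : Fin N → Fin p, (∏ t, a (g t)) * (∑ i, e g i) ^ 2 := by
        refine Finset.sum_congr rfl fun g _ => ?_
        rw [sq, Finset.sum_mul_sum]
        simp only [Finset.mul_sum]
    _ ≥ 0 := Finset.sum_nonneg fun g _ =>
        mul_nonneg (Finset.prod_nonneg fun t _ => ha _) (sq_nonneg _)

lemma gauss_quad_nonneg {n p : ℕ} (θ : Fin p → ℝ) (hθ : ∀ k, 0 ≤ θ k)
    (x : Fin n → Fin p → ℝ) (c : Fin n → ℝ) :
    0 ≤ ∑ i, ∑ j, c i * c j * Real.exp (-∑ k, θ k * (x i k - x j k) ^ 2) := by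
  set d : Fin n → ℝ := fun i => c i * Real.exp (-∑ k, θ k * x i k ^ 2) with hd
  set T : Fin n → Fin n → ℝ := fun i j => ∑ k, (2 * θ k) * (x i k * x j k) with hT
  have expand : ∀ y : ℝ, Real.exp y = ∑' N : ℕ, y ^ N / (N.factorial : ℝ) := by
    intro y
    rw [Real.exp_eq_exp_ℝ, NormedSpace.exp_eq_tsum_div]
  have key : ∀ i j, c i * c j * Real.exp (-∑ k, θ k * (x i k - x j k) ^ 2)
      = d i * d j * Real.exp (T i j) := by
    intro i j
    have hexp : (-∑ k, θ k * (x i k - x j k) ^ 2)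
        = (-∑ k, θ k * x i k ^ 2) + (-∑ k, θ k * x j k ^ 2) + T i j := by
      simp only [hT, ← Finset.sum_neg_distrib, ← Finset.sum_add_distrib]
      exact Finset.sum_congr rfl fun k _ => by ring
    rw [hexp, Real.exp_add, Real.exp_add, hd]
    ring
  have hsummable : ∀ i j : Fin n, Summable fun N : ℕ => d i * d j * (T i j ^ N / (N.factorial : ℝ)) :=
    fun i j => (Real.summable_pow_div_factorial (T i j)).mul_left _
  calc ∑ i, ∑ j, c i * c j * Real.exp (-∑ k, θ k * (x i k - x j k) ^ 2)
      = ∑ i, ∑ j, ∑' N : ℕ, d i * d j * (T i j ^ N / (N.factorial : ℝ)) := by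
        refine Finset.sum_congr rfl fun i _ => Finset.sum_congr rfl fun j _ => ?_
        rw [key i j, expand, ← tsum_mul_left]
    _ = ∑' N : ℕ, ∑ i, ∑ j, d i * d j * (T i j ^ N / (N.factorial : ℝ)) := by
        calc ∑ i, ∑ j, ∑' N : ℕ, d i * d j * (T i j ^ N / (N.factorial : ℝ))
            = ∑ i, ∑' N : ℕ, ∑ j, d i * d j * (T i j ^ N / (N.factorial : ℝ)) :=
              Finset.sum_congr rfl fun i _ => (Summable.tsum_finsetSum (fun j _ => hsummable i j)).symm
          _ = ∑' N : ℕ, ∑ i, ∑ j, d i * d j * (T i j ^ N / (N.factorial : ℝ)) :=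
              (Summable.tsum_finsetSum (fun i _ => summable_sum (fun j _ => hsummable i j))).symm
    _ ≥ 0 := by
        refine tsum_nonneg fun N => ?_
        have h0 : ∀ i j : Fin n, d i * d j * (T i j ^ N / (N.factorial : ℝ))
            = (d i * d j * T i j ^ N) * (1 / (N.factorial : ℝ)) := fun i j => by ring
        simp only [h0, ← Finset.sum_mul]
        refine mul_nonneg ?_ (by positivity)
        exact pow_quad_nonneg (fun k => 2 * θ k) (fun k => by show 0 ≤ 2 * θ k; linarith [hθ k]) x d N


/-- The EzGP covariance function between two inputs `(x1, z1)` and `(x2, z2)`. -/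
noncomputable def ezgpCov {p q : ℕ} {m : Fin q → ℕ}
    (σ0sq : ℝ) (σsq : Fin q → ℝ) (θ0 : Fin p → ℝ)
    (θ : (h : Fin q) → Fin p → Fin (m h) → ℝ)
    (x1 x2 : Fin p → ℝ) (z1 z2 : (h : Fin q) → Fin (m h)) : ℝ :=
  σ0sq * Real.exp (-∑ k, θ0 k * (x1 k - x2 k) ^ 2) +
    ∑ h, ∑ l, (if z1 h = l ∧ z2 h = l then (1 : ℝ) else 0) *
      (σsq h * Real.exp (-∑ k, θ h k l * (x1 k - x2 k) ^ 2))

theorem ezgp_cov_posSemidef {n p q : ℕ} {m : Fin q → ℕ}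
    (x : Fin n → Fin p → ℝ) (z : Fin n → (h : Fin q) → Fin (m h))
    (σ0sq : ℝ) (σsq : Fin q → ℝ) (θ0 : Fin p → ℝ)
    (θ : (h : Fin q) → Fin p → Fin (m h) → ℝ)
    (hσ0 : 0 < σ0sq) (hσ : ∀ h, 0 < σsq h)
    (hθ0 : ∀ k, 0 < θ0 k) (hθ : ∀ h k l, 0 < θ h k l) :
    (Matrix.of fun i j : Fin n =>
      ezgpCov σ0sq σsq θ0 θ (x i) (x j) (z i) (z j)).PosSemidef := by
  have hs : ∀ (t : Fin p → ℝ) (i j : Fin n),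
      (-∑ k, t k * (x j k - x i k) ^ 2) = (-∑ k, t k * (x i k - x j k) ^ 2) := by
    intro t i j
    congr 1
    exact Finset.sum_congr rfl fun k _ => by ring
  rw [Matrix.posSemidef_iff_dotProduct_mulVec]
  constructor
  · ext i j
    simp only [Matrix.conjTranspose_apply, Matrix.of_apply, star_trivial, ezgpCov]
    rw [hs θ0 i j]
    congr 1
    refine Finset.sum_congr rfl fun h _ => Finset.sum_congr rfl fun l _ => ?_
    rw [hs (fun k => θ h k l) i j]
    congr 1
    simp [and_comm]
  · intro v
    simp only [star_trivial, dotProduct, Matrix.mulVec, Matrix.of_apply,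
      Finset.mul_sum]
    have entry : ∀ i j : Fin n,
        v i * (ezgpCov σ0sq σsq θ0 θ (x i) (x j) (z i) (z j) * v j)
        = σ0sq * (v i * v j * Real.exp (-∑ k, θ0 k * (x i k - x j k) ^ 2))
          + ∑ h, ∑ l, σsq h * ((if z i h = l then v i else 0) *
              (if z j h = l then v j else 0) *
              Real.exp (-∑ k, θ h k l * (x i k - x j k) ^ 2)) := by
      intro i j
      simp only [ezgpCov, add_mul, mul_add, Finset.sum_mul, Finset.mul_sum]
      congr 1
      · ring
      refine Finset.sum_congr rfl fun h _ => Finset.sum_congr rfl fun l _ => ?_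
      by_cases hi : z i h = l <;> by_cases hj : z j h = l <;>
        simp [hi, hj] <;> ring
    calc ∑ i, ∑ j, v i * (ezgpCov σ0sq σsq θ0 θ (x i) (x j) (z i) (z j) * v j)
        = ∑ i, ∑ j, (σ0sq * (v i * v j * Real.exp (-∑ k, θ0 k * (x i k - x j k) ^ 2))
            + ∑ h, ∑ l, σsq h * ((if z i h = l then v i else 0) *
                (if z j h = l then v j else 0) *
                Real.exp (-∑ k, θ h k l * (x i k - x j k) ^ 2))) :=
          Finset.sum_congr rfl fun i _ => Finset.sum_congr rfl fun j _ => entry i j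
      _ = σ0sq * (∑ i, ∑ j, v i * v j * Real.exp (-∑ k, θ0 k * (x i k - x j k) ^ 2))
            + ∑ i, ∑ j, ∑ h, ∑ l, σsq h * ((if z i h = l then v i else 0) *
                (if z j h = l then v j else 0) *
                Real.exp (-∑ k, θ h k l * (x i k - x j k) ^ 2)) := by
          simp only [Finset.sum_add_distrib, Finset.mul_sum]
      _ = σ0sq * (∑ i, ∑ j, v i * v j * Real.exp (-∑ k, θ0 k * (x i k - x j k) ^ 2))
            + ∑ h, ∑ l, σsq h * (∑ i, ∑ j, (if z i h = l then v i else 0) *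
                (if z j h = l then v j else 0) *
                Real.exp (-∑ k, θ h k l * (x i k - x j k) ^ 2)) := by
          congr 1
          calc ∑ i, ∑ j, ∑ h, ∑ l, σsq h * ((if z i h = l then v i else 0) *
                  (if z j h = l then v j else 0) *
                  Real.exp (-∑ k, θ h k l * (x i k - x j k) ^ 2))
              = ∑ i, ∑ h, ∑ j, ∑ l, σsq h * ((if z i h = l then v i else 0) *
                  (if z j h = l then v j else 0) *
                  Real.exp (-∑ k, θ h k l * (x i k - x j k) ^ 2)) :=
                Finset.sum_congr rfl fun i _ => Finset.sum_comm
            _ = ∑ h, ∑ i, ∑ j, ∑ l, σsq h * ((if z i h = l then v i else 0) *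
                  (if z j h = l then v j else 0) *
                  Real.exp (-∑ k, θ h k l * (x i k - x j k) ^ 2)) := Finset.sum_comm
            _ = ∑ h, ∑ i, ∑ l, ∑ j, σsq h * ((if z i h = l then v i else 0) *
                  (if z j h = l then v j else 0) *
                  Real.exp (-∑ k, θ h k l * (x i k - x j k) ^ 2)) :=
                Finset.sum_congr rfl fun h _ =>
                  Finset.sum_congr rfl fun i _ => Finset.sum_comm
            _ = ∑ h, ∑ l, ∑ i, ∑ j, σsq h * ((if z i h = l then v i else 0) *
                  (if z j h = l then v j else 0) *
                  Real.exp (-∑ k, θ h k l * (x i k - x j k) ^ 2)) :=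
                Finset.sum_congr rfl fun h _ => Finset.sum_comm
            _ = ∑ h, ∑ l, σsq h * (∑ i, ∑ j, (if z i h = l then v i else 0) *
                  (if z j h = l then v j else 0) *
                  Real.exp (-∑ k, θ h k l * (x i k - x j k) ^ 2)) := by
                simp only [Finset.mul_sum]
      _ ≥ 0 := by
          refine add_nonneg (mul_nonneg hσ0.le ?_) ?_
          · exact gauss_quad_nonneg θ0 (fun k => (hθ0 k).le) x v
          refine Finset.sum_nonneg fun h _ => Finset.sum_nonneg fun l _ =>
            mul_nonneg (hσ h).le ?_
          exact gauss_quad_nonneg (fun k => θ h k l) (fun k => (hθ h k l).le) x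
            (fun i => if z i h = l then v i else 0)
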